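/- Let R > 0, let w : [0, R] → ℝ be a nonnegative C¹ function with w' ≥ 0, and let ψ : [0, R] → ℝ be a C¹ function with ψ(s)/s → 0 as s → 0⁺. Then for every r ∈ (0, R]: w(r)ψ(r)²/r² + ∫_0^r w(s)ψ(s)²/s³ ds ≤ ∫_0^r w(s)(ψ'(s))²/s ds + ∫_0^r ψ(s)² w'(s)/s² ds, provided the right-hand side integrals are finite. -/

import Mathlib

open MeasureTheory Set Filter

theorem stmt_3 (R : ℝ) (hR : 0 < R) (w w' ψ ψ' : ℝ → ℝ)
    (hw : ∀ s ∈ Icc 0 R, 0 ≤ w s)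
    (hw' : ∀ s ∈ Icc 0 R, 0 ≤ w' s)
    (hwd : ∀ s ∈ Icc 0 R, HasDerivWithinAt w (w' s) (Icc 0 R) s)
    (hwc : ContinuousOn w' (Icc 0 R))
    (hψd : ∀ s ∈ Icc 0 R, HasDerivWithinAt ψ (ψ' s) (Icc 0 R) s)
    (hψc : ContinuousOn ψ' (Icc 0 R))
    (h0 : Tendsto (fun s => ψ s / s) (nhdsWithin 0 (Ioi 0)) (nhds 0))
    (r : ℝ) (hr : r ∈ Ioc 0 R)
    (hint1 : IntegrableOn (fun s => w s * ψ' s ^ 2 / s) (Ioc 0 r))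
    (hint2 : IntegrableOn (fun s => ψ s ^ 2 * w' s / s ^ 2) (Ioc 0 r)) :
    ENNReal.ofReal (w r * ψ r ^ 2 / r ^ 2) +
        ∫⁻ s in Ioc 0 r, ENNReal.ofReal (w s * ψ s ^ 2 / s ^ 3) ≤
      ENNReal.ofReal ((∫ s in Ioc 0 r, w s * ψ' s ^ 2 / s) +
        ∫ s in Ioc 0 r, ψ s ^ 2 * w' s / s ^ 2) := by
  obtain ⟨hr0, hrR⟩ := hr
  have hwc0 : ContinuousOn w (Icc 0 R) := fun s hs => (hwd s hs).continuousWithinAt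
  have hψc0 : ContinuousOn ψ (Icc 0 R) := fun s hs => (hψd s hs).continuousWithinAt
  set I1 : ℝ := ∫ s in Ioc 0 r, w s * ψ' s ^ 2 / s with hI1def
  set I2 : ℝ := ∫ s in Ioc 0 r, ψ s ^ 2 * w' s / s ^ 2 with hI2def
  set F : ℝ → ℝ := fun s => w s * ψ s ^ 2 / s ^ 2 with hFdef
  -- nonnegativity of the two RHS integrands on Ioc 0 r
  have hsub0 : Ioc 0 r ⊆ Icc 0 R := fun s hs => ⟨hs.1.le, hs.2.trans hrR⟩
  have h1nn : ∀ s ∈ Ioc 0 r, 0 ≤ w s * ψ' s ^ 2 / s := fun s hs => by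
    have h1 := hw s (hsub0 hs); have h2 : (0:ℝ) < s := hs.1; positivity
  have h2nn : ∀ s ∈ Ioc 0 r, 0 ≤ ψ s ^ 2 * w' s / s ^ 2 := fun s hs => by
    have := hw' s (hsub0 hs); positivity
  have h3nn : ∀ s ∈ Ioc 0 r, 0 ≤ w s * ψ s ^ 2 / s ^ 3 := fun s hs => by
    have h1 := hw s (hsub0 hs); have h2 : (0:ℝ) < s := hs.1; positivity
  -- key inequality for each ε ∈ (0, r)
  have key : ∀ ε ∈ Ioo (0:ℝ) r,
      ENNReal.ofReal (F r) + ∫⁻ s in Ioc ε r, ENNReal.ofReal (w s * ψ s ^ 2 / s ^ 3) ≤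
        ENNReal.ofReal (F ε) + ENNReal.ofReal (I1 + I2) := by
    intro ε hε
    obtain ⟨hε0, hεr⟩ := hε
    have hsub : Icc ε r ⊆ Icc 0 R := Icc_subset_Icc hε0.le hrR
    have hsubo : Ioc ε r ⊆ Ioc 0 r := Ioc_subset_Ioc_left hε0.le
    have hεr' : ε ≤ r := hεr.le
    -- continuity of building blocks on Icc ε r
    have hwcc : ContinuousOn w (Icc ε r) := hwc0.mono hsub
    have hψcc : ContinuousOn ψ (Icc ε r) := hψc0.mono hsub
    have hw'cc : ContinuousOn w' (Icc ε r) := hwc.mono hsub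
    have hψ'cc : ContinuousOn ψ' (Icc ε r) := hψc.mono hsub
    have hspos : ∀ s ∈ Icc ε r, (0:ℝ) < s := fun s hs => hε0.trans_le hs.1
    have hFcc : ContinuousOn F (Icc ε r) := by
      apply ((hwcc.mul (hψcc.pow 2)).div (continuousOn_pow 2))
      intro s hs; exact pow_ne_zero _ (hspos s hs).ne'
    set H1 : ℝ → ℝ := fun s => w s * ψ' s ^ 2 / s with hH1
    set H2 : ℝ → ℝ := fun s => ψ s ^ 2 * w' s / s ^ 2 with hH2
    set H3 : ℝ → ℝ := fun s => w s * ψ s ^ 2 / s ^ 3 with hH3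
    have hH1c : ContinuousOn H1 (Icc ε r) :=
      (hwcc.mul (hψ'cc.pow 2)).div continuousOn_id (fun s hs => (hspos s hs).ne')
    have hH2c : ContinuousOn H2 (Icc ε r) :=
      ((hψcc.pow 2).mul hw'cc).div (continuousOn_pow 2) (fun s hs => pow_ne_zero _ (hspos s hs).ne')
    have hH3c : ContinuousOn H3 (Icc ε r) :=
      (hwcc.mul (hψcc.pow 2)).div (continuousOn_pow 3) (fun s hs => pow_ne_zero _ (hspos s hs).ne')
    set G : ℝ → ℝ := fun s =>
      ((w' s * ψ s ^ 2 + w s * (2 * ψ s * ψ' s)) * s ^ 2 - w s * ψ s ^ 2 * (2 * s)) / (s ^ 2) ^ 2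
      with hG
    have hGc : ContinuousOn G (Icc ε r) := by
      apply ContinuousOn.div
      · exact (((hw'cc.mul (hψcc.pow 2)).add
          (hwcc.mul ((continuousOn_const.mul hψcc).mul hψ'cc))).mul (continuousOn_pow 2)).sub
          ((hwcc.mul (hψcc.pow 2)).mul (continuousOn_const.mul continuousOn_id))
      · exact (continuousOn_pow 2).pow 2
      · intro s hs; exact pow_ne_zero _ (pow_ne_zero _ (hspos s hs).ne')
    have hderiv : ∀ s ∈ Ioo ε r, HasDerivAt F (G s) s := by
      intro s hs
      have hsmem : s ∈ Icc 0 R := hsub ⟨hs.1.le, hs.2.le⟩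
      have hnhds : Icc (0:ℝ) R ∈ nhds s := by
        apply mem_of_superset (Ioo_mem_nhds (hε0.trans hs.1) (hs.2.trans_le hrR)) Ioo_subset_Icc_self
      have hwda : HasDerivAt w (w' s) s := (hwd s hsmem).hasDerivAt hnhds
      have hψda : HasDerivAt ψ (ψ' s) s := (hψd s hsmem).hasDerivAt hnhds
      have hnum : HasDerivAt (fun y => w y * ψ y ^ 2)
          (w' s * ψ s ^ 2 + w s * (2 * ψ s * ψ' s)) s := by
        have : HasDerivAt (fun y => w y * ψ y ^ 2) _ s := hwda.mul ((hψda.pow 2))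
        convert this using 1
        ring
      have hden : HasDerivAt (fun y : ℝ => y ^ 2) (2 * s) s := by
        simpa using hasDerivAt_pow 2 s
      have := hnum.div hden (pow_ne_zero 2 (hε0.trans hs.1).ne')
      exact this
    have hGint : IntervalIntegrable G volume ε r := by
      apply ContinuousOn.intervalIntegrable; rwa [uIcc_of_le hεr']
    have hH : ∀ s ∈ Icc ε r, G s ≤ H1 s + H2 s - H3 s := by
      intro s hs
      have hs0 : (0:ℝ) < s := hspos s hs
      have hws : 0 ≤ w s := hw s (hsub hs)
      have hkey : H1 s + H2 s - H3 s - G s = w s * (s * ψ' s - ψ s) ^ 2 / s ^ 3 := by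
        simp only [hH1, hH2, hH3, hG]
        field_simp
        ring
      nlinarith [div_nonneg (mul_nonneg hws (sq_nonneg (s * ψ' s - ψ s))) (pow_nonneg hs0.le 3)]
    have hHint : IntervalIntegrable (fun s => H1 s + H2 s - H3 s) volume ε r := by
      apply ContinuousOn.intervalIntegrable
      rw [uIcc_of_le hεr']
      exact (hH1c.add hH2c).sub hH3c
    have hFTC : ∫ s in ε..r, G s = F r - F ε :=
      intervalIntegral.integral_eq_sub_of_hasDerivAt_of_le hεr' hFcc hderiv hGint
    have hmono : ∫ s in ε..r, G s ≤ ∫ s in ε..r, (H1 s + H2 s - H3 s) :=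
      intervalIntegral.integral_mono_on hεr' hGint hHint hH
    -- set integrals over Ioc ε r
    have hH1int : IntegrableOn H1 (Ioc ε r) :=
      (hH1c.integrableOn_Icc).mono_set Ioc_subset_Icc_self
    have hH2int : IntegrableOn H2 (Ioc ε r) :=
      (hH2c.integrableOn_Icc).mono_set Ioc_subset_Icc_self
    have hH3int : IntegrableOn H3 (Ioc ε r) :=
      (hH3c.integrableOn_Icc).mono_set Ioc_subset_Icc_self
    have hsplit : ∫ s in ε..r, (H1 s + H2 s - H3 s) =
        (∫ s in Ioc ε r, H1 s) + (∫ s in Ioc ε r, H2 s) - ∫ s in Ioc ε r, H3 s := by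
      have hsumint : IntegrableOn (fun s => H1 s + H2 s) (Ioc ε r) := hH1int.add hH2int
      rw [intervalIntegral.integral_of_le hεr']
      rw [integral_sub hsumint hH3int, integral_add hH1int hH2int]
    have hreal : F r + ∫ s in Ioc ε r, H3 s ≤
        F ε + ((∫ s in Ioc ε r, H1 s) + ∫ s in Ioc ε r, H2 s) := by
      rw [hFTC, hsplit] at hmono; linarith
    -- monotonicity of the RHS integrals in the domain
    have h1mono : ∫ s in Ioc ε r, H1 s ≤ I1 := by
      apply setIntegral_mono_set hint1
      · exact (ae_restrict_mem measurableSet_Ioc).mono fun s hs => h1nn s hs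
      · exact HasSubset.Subset.eventuallyLE hsubo
    have h2mono : ∫ s in Ioc ε r, H2 s ≤ I2 := by
      apply setIntegral_mono_set hint2
      · exact (ae_restrict_mem measurableSet_Ioc).mono fun s hs => h2nn s hs
      · exact HasSubset.Subset.eventuallyLE hsubo
    have hreal2 : F r + ∫ s in Ioc ε r, H3 s ≤ F ε + (I1 + I2) := by linarith
    have hlin : ∫⁻ s in Ioc ε r, ENNReal.ofReal (w s * ψ s ^ 2 / s ^ 3) =
        ENNReal.ofReal (∫ s in Ioc ε r, H3 s) := by
      rw [ofReal_integral_eq_lintegral_ofReal hH3int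
        ((ae_restrict_mem measurableSet_Ioc).mono fun s hs => h3nn s (hsubo hs))]
    have hFr : 0 ≤ F r := by
      have := hw r ⟨hr0.le, hrR⟩; simp only [hFdef]; positivity
    have hI3nn : 0 ≤ ∫ s in Ioc ε r, H3 s :=
      setIntegral_nonneg measurableSet_Ioc fun s hs => h3nn s (hsubo hs)
    calc ENNReal.ofReal (F r) + ∫⁻ s in Ioc ε r, ENNReal.ofReal (w s * ψ s ^ 2 / s ^ 3)
        = ENNReal.ofReal (F r + ∫ s in Ioc ε r, H3 s) := by
          rw [hlin, ENNReal.ofReal_add hFr hI3nn]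
      _ ≤ ENNReal.ofReal (F ε + (I1 + I2)) := ENNReal.ofReal_le_ofReal hreal2
      _ ≤ ENNReal.ofReal (F ε) + ENNReal.ofReal (I1 + I2) := ENNReal.ofReal_add_le
  -- the sequence εₙ = r/(n+2)
  set e : ℕ → ℝ := fun n => r / (n + 2) with he
  have hemem : ∀ n, e n ∈ Ioo (0:ℝ) r := by
    intro n
    constructor
    · apply div_pos hr0; positivity
    · apply div_lt_self hr0; linarith [Nat.cast_nonneg (α := ℝ) n]
  have heanti : Antitone e := by
    intro n m h
    apply div_le_div_of_nonneg_left hr0.le (by positivity)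
    exact add_le_add_left (Nat.cast_le.2 h) 2
  have heto : Tendsto e atTop (nhds 0) := by
    apply Tendsto.div_atTop tendsto_const_nhds
    apply tendsto_atTop_add_const_right
    exact tendsto_natCast_atTop_atTop
  have hetoW : Tendsto e atTop (nhdsWithin 0 (Ioi 0)) :=
    tendsto_nhdsWithin_of_tendsto_nhds_of_eventually_within _ heto
      (Eventually.of_forall fun n => (hemem n).1)
  -- F (e n) → 0
  have hF0 : Tendsto (fun s => F s) (nhdsWithin 0 (Ioi 0)) (nhds 0) := by
    have hwt : Tendsto w (nhdsWithin 0 (Ioi 0)) (nhds (w 0)) := by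
      have h1 : ContinuousWithinAt w (Icc 0 R) 0 :=
        (hwd 0 ⟨le_rfl, hR.le⟩).continuousWithinAt
      have h2 : ContinuousWithinAt w (Ioc 0 R) 0 := h1.mono Ioc_subset_Icc_self
      rw [ContinuousWithinAt, nhdsWithin_Ioc_eq_nhdsGT hR] at h2
      exact h2
    have hmul : Tendsto (fun s => w s * (ψ s / s) ^ 2) (nhdsWithin 0 (Ioi 0))
        (nhds (w 0 * 0 ^ 2)) := hwt.mul (h0.pow 2)
    rw [show w 0 * (0:ℝ) ^ 2 = 0 by ring] at hmul
    apply hmul.congr'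
    filter_upwards [self_mem_nhdsWithin] with s hs
    have hs0 : s ≠ 0 := (ne_of_gt hs)
    simp only [hFdef]
    rw [div_pow, mul_div_assoc]
  have hFe : Tendsto (fun n => ENNReal.ofReal (F (e n))) atTop (nhds 0) := by
    have := (ENNReal.continuous_ofReal.tendsto 0).comp (hF0.comp hetoW)
    rw [ENNReal.ofReal_zero] at this; exact this
  -- continuous global extensions and the measurable ENNReal integrand
  set cl : ℝ → ℝ := fun s => min (max s 0) R with hcl
  have hclc : Continuous cl := (continuous_id.max continuous_const).min continuous_const
  have hclmaps : ∀ s, cl s ∈ Icc 0 R :=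
    fun s => ⟨le_min (le_max_right _ _) hR.le, min_le_right _ _⟩
  have hcleq : ∀ s ∈ Ioc 0 r, cl s = s := by
    intro s hs
    simp only [hcl]
    rw [max_eq_left hs.1.le, min_eq_left (hs.2.trans hrR)]
  set f' : ℝ → ENNReal := fun s => ENNReal.ofReal (w (cl s) * ψ (cl s) ^ 2 / s ^ 3) with hf'
  have hWc : Continuous fun s => w (cl s) := hwc0.comp_continuous hclc hclmaps
  have hΨc : Continuous fun s => ψ (cl s) := hψc0.comp_continuous hclc hclmaps
  have hf'm : Measurable f' := by
    apply ENNReal.measurable_ofReal.comp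
    exact ((hWc.mul (hΨc.pow 2)).measurable).div ((continuous_pow 3).measurable)
  have hcongr : ∀ a : ℝ, Ioc a r ⊆ Ioc 0 r →
      ∫⁻ s in Ioc a r, ENNReal.ofReal (w s * ψ s ^ 2 / s ^ 3) = ∫⁻ s in Ioc a r, f' s := by
    intro a hsub
    apply lintegral_congr_ae
    filter_upwards [ae_restrict_mem measurableSet_Ioc] with s hs
    simp only [hf', hcleq s (hsub hs)]
  -- monotone convergence
  have hmono2 : Monotone (fun n => ∫⁻ s in Ioc (e n) r, f' s) := by
    intro n m h
    exact lintegral_mono' (Measure.restrict_mono (Ioc_subset_Ioc_left (heanti h)) le_rfl) le_rfl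
  have hsup_eq : (⨆ n, ∫⁻ s in Ioc (e n) r, f' s) = ∫⁻ s in Ioc 0 r, f' s := by
    have hind : ∀ n, (∫⁻ s in Ioc (e n) r, f' s) =
        ∫⁻ s, (Ioc (e n) r).indicator f' s := fun n =>
      (lintegral_indicator measurableSet_Ioc f').symm
    simp only [hind]
    rw [← lintegral_iSup (fun n => hf'm.indicator measurableSet_Ioc)]
    · rw [show (fun s => ⨆ n, (Ioc (e n) r).indicator f' s) = (Ioc 0 r).indicator f' by
        funext s
        by_cases hs : s ∈ Ioc 0 r
        · rw [indicator_of_mem hs]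
          obtain ⟨n, hn⟩ := (heto.eventually (gt_mem_nhds hs.1)).exists
          apply le_antisymm
          · exact iSup_le fun m => indicator_le_self _ _ s
          · rw [← indicator_of_mem (show s ∈ Ioc (e n) r from ⟨hn, hs.2⟩) f']
            exact le_iSup (fun m => (Ioc (e m) r).indicator f' s) n
        · rw [indicator_of_notMem hs]
          refine le_antisymm (iSup_le fun m => ?_) zero_le
          rw [indicator_of_notMem (fun h => hs (Ioc_subset_Ioc_left (hemem m).1.le h))]]
      exact lintegral_indicator measurableSet_Ioc f'
    · intro n m h
      intro s
      dsimp only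
      by_cases hs : s ∈ Ioc (e n) r
      · rw [indicator_of_mem hs, indicator_of_mem (Ioc_subset_Ioc_left (heanti h) hs)]
      · rw [indicator_of_notMem hs]; exact zero_le
  have hlimA : Tendsto (fun n => ENNReal.ofReal (F r) +
      ∫⁻ s in Ioc (e n) r, ENNReal.ofReal (w s * ψ s ^ 2 / s ^ 3)) atTop
      (nhds (ENNReal.ofReal (F r) + ∫⁻ s in Ioc 0 r, ENNReal.ofReal (w s * ψ s ^ 2 / s ^ 3))) := by
    have h1 : Tendsto (fun n => ∫⁻ s in Ioc (e n) r, f' s) atTop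
        (nhds (∫⁻ s in Ioc 0 r, f' s)) := hsup_eq ▸ tendsto_atTop_iSup hmono2
    have h2 : Tendsto (fun n => ∫⁻ s in Ioc (e n) r, ENNReal.ofReal (w s * ψ s ^ 2 / s ^ 3)) atTop
        (nhds (∫⁻ s in Ioc 0 r, ENNReal.ofReal (w s * ψ s ^ 2 / s ^ 3))) := by
      rw [hcongr 0 (le_refl _)]
      apply h1.congr
      intro n
      exact (hcongr (e n) (Ioc_subset_Ioc_left (hemem n).1.le)).symm
    exact Tendsto.const_add _ h2
  have hlimB : Tendsto (fun n => ENNReal.ofReal (F (e n)) + ENNReal.ofReal (I1 + I2)) atTop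
      (nhds (ENNReal.ofReal (I1 + I2))) := by
    have := hFe.add_const (ENNReal.ofReal (I1 + I2))
    simpa using this
  exact le_of_tendsto_of_tendsto' hlimA hlimB fun n => key (e n) (hemem n)
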